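/- Let X ~ Heine(λ) with parameter 0 < q < 1, λ > 0, i.e. P(X=j) = e_q(-λ) q^{j(j-1)/2}(λ(1-q))^j/(q;q)_j. If a > 1/q, then there exists C > 0 with p_j ≥ C a^{-j(j-1)/2} for all j; hence the log-Heine distribution of Y = a^X admits a perturbation and is moment-indeterminate. -/

import Mathlib

open Finset Filter

private lemma tri_succ (j : ℕ) : (j + 1) * ((j + 1) - 1) / 2 = j * (j - 1) / 2 + j := by
  rw [← Nat.choose_two_right, ← Nat.choose_two_right, Nat.choose_succ_succ,
    Nat.choose_one_right, Nat.add_comm]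

private noncomputable def qc (b : ℝ) (j : ℕ) : ℝ :=
  b ^ (j * (j - 1) / 2) / ∏ s ∈ Finset.range j, (1 - b ^ (s + 1))

private lemma qprod_pos {b : ℝ} (hb0 : 0 < b) (hb1 : b < 1) (j : ℕ) :
    0 < ∏ s ∈ Finset.range j, (1 - b ^ (s + 1)) :=
  Finset.prod_pos fun s _ => by
    have : b ^ (s + 1) < 1 := pow_lt_one₀ hb0.le hb1 (Nat.succ_ne_zero s)
    linarith

private lemma qc_pos {b : ℝ} (hb0 : 0 < b) (hb1 : b < 1) (j : ℕ) : 0 < qc b j :=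
  div_pos (pow_pos hb0 _) (qprod_pos hb0 hb1 j)

private lemma qc_succ {b : ℝ} (hb0 : 0 < b) (hb1 : b < 1) (j : ℕ) :
    qc b (j + 1) * (1 - b ^ (j + 1)) = qc b j * b ^ j := by
  unfold qc
  rw [tri_succ, pow_add, Finset.prod_range_succ]
  have h1 := qprod_pos hb0 hb1 j
  have h2 : (0:ℝ) < 1 - b ^ (j + 1) := by
    have : b ^ (j + 1) < 1 := pow_lt_one₀ hb0.le hb1 (Nat.succ_ne_zero j)
    linarith
  field_simp

private lemma qc_summable {b : ℝ} (hb0 : 0 < b) (hb1 : b < 1) (x : ℝ) :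
    Summable (fun j : ℕ => qc b j * x ^ j) := by
  apply summable_of_ratio_norm_eventually_le (r := 1/2) (by norm_num)
  have hev : ∀ᶠ j : ℕ in atTop, b ^ j < (1 - b) / (2 * (|x| + 1)) := by
    apply (tendsto_pow_atTop_nhds_zero_of_lt_one hb0.le hb1).eventually_lt_const
    have : (0:ℝ) < 1 - b := by linarith
    positivity
  filter_upwards [hev] with j hj
  have hq1 : (0:ℝ) < 1 - b ^ (j + 1) := by
    have : b ^ (j + 1) < 1 := pow_lt_one₀ hb0.le hb1 (Nat.succ_ne_zero j)
    linarith
  have hcs := qc_succ hb0 hb1 j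
  have hcpos := qc_pos hb0 hb1 j
  have hcpos1 := qc_pos hb0 hb1 (j + 1)
  have hbj1 : b ^ (j + 1) ≤ b := by
    calc b ^ (j + 1) ≤ b ^ 1 :=
        pow_le_pow_of_le_one hb0.le hb1.le (Nat.one_le_iff_ne_zero.2 (Nat.succ_ne_zero j))
      _ = b := pow_one b
  have habs : (0:ℝ) ≤ |x| := abs_nonneg x
  have hb_ineq : b ^ j * |x| * 2 ≤ 1 - b ^ (j + 1) := by
    rw [lt_div_iff₀ (by positivity : (0:ℝ) < 2 * (|x| + 1))] at hj
    nlinarith [pow_pos hb0 j]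
  have key : qc b (j + 1) * |x| ≤ 1 / 2 * qc b j := by
    have h6 : qc b (j + 1) * |x| * (1 - b ^ (j + 1)) ≤ 1 / 2 * qc b j * (1 - b ^ (j + 1)) := by
      have h7 : qc b (j + 1) * |x| * (1 - b ^ (j + 1)) = (qc b j * b ^ j) * |x| := by
        rw [← hcs]; ring
      rw [h7]
      nlinarith [mul_le_mul_of_nonneg_left hb_ineq hcpos.le]
    exact le_of_mul_le_mul_right h6 hq1
  calc ‖qc b (j + 1) * x ^ (j + 1)‖ = (qc b (j + 1) * |x|) * |x| ^ j := by
        rw [Real.norm_eq_abs, abs_mul, abs_pow, abs_of_pos hcpos1]; ring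
    _ ≤ (1 / 2 * qc b j) * |x| ^ j :=
        mul_le_mul_of_nonneg_right key (pow_nonneg habs j)
    _ = 1 / 2 * ‖qc b j * x ^ j‖ := by
        rw [Real.norm_eq_abs, abs_mul, abs_pow, abs_of_pos hcpos]; ring

set_option maxHeartbeats 1000000 in
private lemma qc_feq {b : ℝ} (hb0 : 0 < b) (hb1 : b < 1) (x : ℝ) :
    ∑' j : ℕ, qc b j * x ^ j = (1 + x) * ∑' j : ℕ, qc b j * (b * x) ^ j := by
  have hf := qc_summable hb0 hb1 x
  have hg := qc_summable hb0 hb1 (b * x)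
  have hgs : Summable (fun j : ℕ => qc b (j + 1) * (b * x) ^ (j + 1)) :=
    (summable_nat_add_iff 1).2 hg
  have hxg : Summable (fun j : ℕ => x * (qc b j * (b * x) ^ j)) := hg.mul_left x
  have key : ∀ j : ℕ, qc b (j + 1) * x ^ (j + 1) =
      qc b (j + 1) * (b * x) ^ (j + 1) + x * (qc b j * (b * x) ^ j) := by
    intro j
    have hcs := qc_succ hb0 hb1 j
    have h1 : qc b (j + 1) = qc b (j + 1) * b ^ (j + 1) + qc b j * b ^ j := by nlinarith [hcs]
    calc qc b (j + 1) * x ^ (j + 1)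
        = (qc b (j + 1) * b ^ (j + 1) + qc b j * b ^ j) * x ^ (j + 1) := by rw [← h1]
      _ = qc b (j + 1) * (b * x) ^ (j + 1) + x * (qc b j * (b * x) ^ j) := by
          rw [mul_pow, mul_pow]; ring
  rw [Summable.tsum_eq_zero_add hf, tsum_congr key, Summable.tsum_add hgs hxg, tsum_mul_left,
      Summable.tsum_eq_zero_add hg]
  simp only [pow_zero, mul_one]
  ring

private lemma qc_moment_zero {a : ℝ} (ha : 1 < a) (k : ℕ) :
    ∑' j : ℕ, qc a⁻¹ j * (-(a ^ k)) ^ j = 0 := by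
  have ha0 : (0:ℝ) < a := lt_trans one_pos ha
  have hb0 : (0:ℝ) < a⁻¹ := by positivity
  have hb1 : a⁻¹ < 1 := inv_lt_one_of_one_lt₀ ha
  induction k with
  | zero =>
    have hfe := qc_feq hb0 hb1 (-(a ^ 0))
    rw [hfe]
    norm_num
  | succ k ih =>
    have hfe := qc_feq hb0 hb1 (-(a ^ (k + 1)))
    have hb : a⁻¹ * -(a ^ (k + 1)) = -(a ^ k) := by
      field_simp
      ring
    rw [hfe, hb, ih, mul_zero]

private lemma one_sub_sum_le_prod (x : ℕ → ℝ) (hx0 : ∀ s, 0 ≤ x s) (hx1 : ∀ s, x s ≤ 1)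
    (S : Finset ℕ) : 1 - ∑ s ∈ S, x s ≤ ∏ s ∈ S, (1 - x s) := by
  induction S using Finset.induction with
  | empty => simp
  | @insert a S hmem ih =>
    rw [Finset.prod_insert hmem, Finset.sum_insert hmem]
    have h1 : 0 ≤ ∏ s ∈ S, (1 - x s) := Finset.prod_nonneg fun s _ => by
      have := hx1 s; linarith
    have h2 : 0 ≤ ∑ s ∈ S, x s := Finset.sum_nonneg fun s _ => hx0 s
    have h3 := hx0 a
    have h4 := hx1 a
    nlinarith [mul_le_mul_of_nonneg_left ih (by linarith : (0:ℝ) ≤ 1 - x a)]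

private lemma exists_pochhammer_lb {b : ℝ} (hb0 : 0 < b) (hb1 : b < 1) :
    ∃ D > (0:ℝ), ∀ j : ℕ, D ≤ ∏ s ∈ Finset.range j, (1 - b ^ (s + 1)) := by
  have hfac : ∀ s : ℕ, 0 < 1 - b ^ (s + 1) := fun s => by
    have : b ^ (s+1) < 1 := pow_lt_one₀ hb0.le hb1 (Nat.succ_ne_zero s)
    linarith
  have hfac1 : ∀ s : ℕ, 1 - b ^ (s + 1) ≤ 1 := fun s => by
    have : 0 < b ^ (s+1) := pow_pos hb0 _
    linarith
  obtain ⟨N, hN⟩ := exists_pow_lt_of_lt_one (show (0:ℝ) < (1 - b)/2 by linarith) hb1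
  set PN := ∏ s ∈ Finset.range N, (1 - b ^ (s + 1)) with hPN
  have hPNpos : 0 < PN := Finset.prod_pos fun s _ => hfac s
  refine ⟨PN * (1/2), by positivity, fun j => ?_⟩
  rcases le_or_gt j N with hj | hj
  · have : (∏ s ∈ Finset.range j, (1 - b ^ (s+1))) * ∏ s ∈ Finset.Ico j N, (1 - b ^ (s+1)) = PN :=
      Finset.prod_range_mul_prod_Ico _ hj
    have hIco1 : ∏ s ∈ Finset.Ico j N, (1 - b ^ (s+1)) ≤ 1 :=
      Finset.prod_le_one (fun s _ => (hfac s).le) (fun s _ => hfac1 s)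
    have hIco0 : 0 < ∏ s ∈ Finset.Ico j N, (1 - b ^ (s+1)) := Finset.prod_pos fun s _ => hfac s
    have hjpos : 0 < ∏ s ∈ Finset.range j, (1 - b ^ (s+1)) := Finset.prod_pos fun s _ => hfac s
    nlinarith
  · have hsplit : PN * ∏ s ∈ Finset.Ico N j, (1 - b ^ (s+1)) =
        ∏ s ∈ Finset.range j, (1 - b ^ (s+1)) :=
      Finset.prod_range_mul_prod_Ico _ hj.le
    have hsum : ∑ s ∈ Finset.Ico N j, b ^ (s + 1) ≤ 1/2 := by
      have h1 : ∑ s ∈ Finset.Ico N j, b ^ (s + 1)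
          = ∑ i ∈ Finset.range (j - N), b ^ (N + i + 1) := by
        rw [Finset.sum_Ico_eq_sum_range]
      have h2 : ∀ i, b ^ (N + i + 1) = b ^ (N + 1) * b ^ i := fun i => by ring
      rw [h1]
      simp_rw [h2]
      rw [← Finset.mul_sum]
      have hgeom : ∑ i ∈ Finset.range (j - N), b ^ i ≤ 1 / (1 - b) := by
        rw [geom_sum_eq (by linarith : b ≠ 1)]
        have h3 : (b ^ (j - N) - 1) / (b - 1) = (1 - b ^ (j - N)) / (1 - b) := by
          rw [div_eq_div_iff (by linarith : b - 1 ≠ 0) (by linarith : 1 - b ≠ 0)]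
          ring
        rw [h3]
        have h4 : 0 < b ^ (j - N) := pow_pos hb0 _
        gcongr
        · linarith
      have hbN : b ^ (N + 1) ≤ (1 - b)/2 * b := by
        have : b ^ (N+1) = b ^ N * b := by ring
        nlinarith [pow_pos hb0 N]
      calc b ^ (N+1) * ∑ i ∈ Finset.range (j - N), b ^ i
          ≤ ((1 - b)/2 * b) * (1 / (1-b)) := by
            apply mul_le_mul hbN hgeom (Finset.sum_nonneg fun i _ => (pow_pos hb0 i).le)
            nlinarith
        _ = b / 2 := by
            have h5 : (1:ℝ) - b ≠ 0 := by linarith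
            field_simp
        _ ≤ 1/2 := by linarith
    have hIco : 1/2 ≤ ∏ s ∈ Finset.Ico N j, (1 - b ^ (s+1)) := by
      have := one_sub_sum_le_prod (fun s => b ^ (s+1)) (fun s => (pow_pos hb0 _).le)
        (fun s => by have := hfac s; linarith) (Finset.Ico N j)
      linarith
    nlinarith

set_option maxHeartbeats 2000000 in
/-- Log-Heine, `a > 1/q`: the Heine probabilities satisfy `p_j ≥ C a^{-j(j-1)/2}` for
some `C > 0`; hence the log-Heine law of `Y = a^X` admits a perturbation and is
moment-indeterminate. -/
theorem log_heine_stieltjes_exists (q lam a : ℝ) (hq0 : 0 < q) (hq1 : q < 1)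
    (hlam : 0 < lam) (ha : 1 / q < a)
    (p : ℕ → ℝ)
    (hpdef : ∀ j : ℕ, p j = (∏' s : ℕ, (1 + lam * (1 - q) * q ^ s))⁻¹ *
      q ^ (j * (j - 1) / 2) * (lam * (1 - q)) ^ j /
        ∏ s ∈ Finset.range j, (1 - q ^ (s + 1))) :
    (∃ C > (0 : ℝ), ∀ j : ℕ, C * (a ^ (j * (j - 1) / 2))⁻¹ ≤ p j) ∧
    (∃ h : ℕ → ℝ, h ≠ 0 ∧ (⨆ j : ℕ, |h j|) = 1 ∧
      ∀ k : ℕ, Summable (fun j : ℕ => |a ^ (k * j) * p j * h j|) ∧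
        (∑' j : ℕ, a ^ (k * j) * p j * h j) = 0) ∧
    (∃ p' : ℕ → ℝ, (∀ j, 0 ≤ p' j) ∧ (∑' j, p' j) = ∑' j, p j ∧ p' ≠ p ∧
      ∀ k : ℕ, (∑' j : ℕ, a ^ (k * j) * p' j) = ∑' j : ℕ, a ^ (k * j) * p j) := by
  have hq1' : (0:ℝ) < 1 - q := by linarith
  have ht : (0:ℝ) < lam * (1 - q) := by positivity
  have ha1 : 1 < a := lt_trans (one_lt_one_div hq0 hq1) ha
  have ha0 : (0:ℝ) < a := lt_trans one_pos ha1
  have hqa : 1 < q * a := by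
    rw [div_lt_iff₀ hq0] at ha
    nlinarith
  have hb0 : (0:ℝ) < a⁻¹ := by positivity
  have hb1 : a⁻¹ < 1 := inv_lt_one_of_one_lt₀ ha1
  set t := lam * (1 - q) with htdef
  set Z := (∏' s : ℕ, (1 + lam * (1 - q) * q ^ s)) with hZdef
  have hZ1 : 1 ≤ Z := by
    by_cases hm : Multipliable (fun s : ℕ => 1 + lam * (1 - q) * q ^ s)
    · have h0 : ∀ s : ℕ, (1:ℝ) ≤ 1 + lam * (1 - q) * q ^ s := fun s => by
        nlinarith [pow_pos hq0 s]
      refine ge_of_tendsto hm.hasProd (Filter.Eventually.of_forall fun s => ?_)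
      calc (1:ℝ) = ∏ _i ∈ s, (1:ℝ) := (Finset.prod_const_one).symm
        _ ≤ ∏ i ∈ s, (1 + lam * (1 - q) * q ^ i) :=
            Finset.prod_le_prod (fun i _ => zero_le_one) (fun i _ => h0 i)
    · rw [hZdef, tprod_eq_one_of_not_multipliable hm]
  have hZpos : (0:ℝ) < Z := lt_of_lt_of_le one_pos hZ1
  have hZinv : (0:ℝ) < Z⁻¹ := inv_pos.2 hZpos
  clear_value t Z
  have hqprod := fun j => qprod_pos hq0 hq1 j
  have hqprod1 : ∀ j : ℕ, ∏ s ∈ Finset.range j, (1 - q ^ (s + 1)) ≤ 1 := fun j =>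
    Finset.prod_le_one
      (fun s _ => by
        have h5 : q ^ (s + 1) < 1 := pow_lt_one₀ hq0.le hq1 (Nat.succ_ne_zero s)
        linarith)
      (fun s _ => by nlinarith [pow_pos hq0 (s+1)])
  have hppos : ∀ j, 0 < p j := fun j => by
    rw [hpdef j]
    exact div_pos (by positivity) (hqprod j)
  -- lower bound on p
  have hplow : ∀ j : ℕ, Z⁻¹ * (q ^ (j * (j - 1) / 2) * t ^ j) ≤ p j := by
    intro j
    rw [hpdef j, le_div_iff₀ (hqprod j)]
    have hnn : (0:ℝ) ≤ Z⁻¹ * (q ^ (j * (j - 1) / 2) * t ^ j) := by positivity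
    calc Z⁻¹ * (q ^ (j * (j - 1) / 2) * t ^ j) * ∏ s ∈ Finset.range j, (1 - q ^ (s + 1))
        ≤ Z⁻¹ * (q ^ (j * (j - 1) / 2) * t ^ j) * 1 :=
          mul_le_mul_of_nonneg_left (hqprod1 j) hnn
      _ = Z⁻¹ * q ^ (j * (j - 1) / 2) * t ^ j := by ring
  -- Part 1
  obtain ⟨N, hN⟩ := pow_unbounded_of_one_lt (t⁻¹) hqa
  set r : ℕ → ℝ := fun j => (q * a) ^ (j * (j - 1) / 2) * t ^ j with hrdef
  have hrpos : ∀ j, 0 < r j := fun j => by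
    rw [hrdef]
    have : (0:ℝ) < q * a := by positivity
    positivity
  have hstep : ∀ j, N ≤ j → r j ≤ r (j + 1) := by
    intro j hj
    have hr1 : r (j + 1) = r j * ((q * a) ^ j * t) := by
      rw [hrdef]
      simp only
      rw [tri_succ, pow_add, pow_succ]
      ring
    rw [hr1]
    have hqa0 : (0:ℝ) < q * a := by positivity
    have hmono : (q * a) ^ N ≤ (q * a) ^ j := pow_le_pow_right₀ hqa.le hj
    have h2 : t⁻¹ < (q * a) ^ j := lt_of_lt_of_le hN hmono
    have h1 : 1 ≤ (q * a) ^ j * t := by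
      have h3 := mul_le_mul_of_nonneg_right h2.le ht.le
      rw [inv_mul_cancel₀ (ne_of_gt ht)] at h3
      exact h3
    nlinarith [hrpos j]
  have hmono : ∀ m, r N ≤ r (N + m) := by
    intro m
    induction m with
    | zero => simp
    | succ m ih =>
      calc r N ≤ r (N + m) := ih
        _ ≤ r (N + m + 1) := hstep (N + m) (Nat.le_add_right N m)
  have hne : (Finset.range (N + 1)).Nonempty := ⟨0, Finset.mem_range.2 (Nat.succ_pos N)⟩
  set C' := (Finset.range (N + 1)).inf' hne r with hC'
  have hC'pos : 0 < C' := (Finset.lt_inf'_iff hne).2 fun j _ => hrpos j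
  have hC'le : ∀ j, C' ≤ r j := by
    intro j
    rcases le_or_gt j N with hj | hj
    · exact Finset.inf'_le _ (Finset.mem_range.2 (Nat.lt_succ_of_le hj))
    · have h1 : C' ≤ r N := Finset.inf'_le _ (Finset.mem_range.2 (Nat.lt_succ_self N))
      have h2 := hmono (j - N)
      rw [Nat.add_sub_cancel' hj.le] at h2
      linarith
  set C := Z⁻¹ * C' with hCdef
  have hCpos : 0 < C := by positivity
  have part1 : ∀ j : ℕ, C * (a ^ (j * (j - 1) / 2))⁻¹ ≤ p j := by
    intro j
    refine le_trans ?_ (hplow j)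
    have hae : (0:ℝ) < a ^ (j * (j - 1) / 2) := pow_pos ha0 _
    have h3 : C' ≤ q ^ (j * (j - 1) / 2) * t ^ j * a ^ (j * (j - 1) / 2) := by
      calc C' ≤ r j := hC'le j
        _ = q ^ (j * (j - 1) / 2) * t ^ j * a ^ (j * (j - 1) / 2) := by
            rw [hrdef]; simp only; rw [mul_pow]; ring
    have h2 : C' * (a ^ (j * (j - 1) / 2))⁻¹ ≤ q ^ (j * (j - 1) / 2) * t ^ j := by
      rw [mul_inv_le_iff₀ hae]
      exact h3
    calc C * (a ^ (j * (j - 1) / 2))⁻¹ = Z⁻¹ * (C' * (a ^ (j * (j - 1) / 2))⁻¹) := by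
          rw [hCdef]; ring
      _ ≤ Z⁻¹ * (q ^ (j * (j - 1) / 2) * t ^ j) := mul_le_mul_of_nonneg_left h2 hZinv.le
  refine ⟨⟨C, hCpos, part1⟩, ?_⟩
  -- Part 2 setup
  obtain ⟨D, hD, hDle⟩ := exists_pochhammer_lb hb0 hb1
  have hc_ub : ∀ j : ℕ, qc a⁻¹ j ≤ (a ^ (j * (j - 1) / 2))⁻¹ / D := by
    intro j
    have h1 : qc a⁻¹ j ≤ (a⁻¹) ^ (j * (j - 1) / 2) / D := by
      unfold qc
      exact div_le_div_of_nonneg_left (by positivity) hD (hDle j)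
    rwa [inv_pow] at h1
  have hB : ∀ j : ℕ, qc a⁻¹ j / p j ≤ (D * C)⁻¹ := by
    intro j
    have hae : (0:ℝ) < a ^ (j * (j - 1) / 2) := pow_pos ha0 _
    have h1 : qc a⁻¹ j / p j ≤ ((a ^ (j * (j - 1) / 2))⁻¹ / D) / (C * (a ^ (j * (j - 1) / 2))⁻¹) :=
      div_le_div₀ (by positivity) (hc_ub j) (by positivity) (part1 j)
    have h2 : ((a ^ (j * (j - 1) / 2))⁻¹ / D) / (C * (a ^ (j * (j - 1) / 2))⁻¹) = (D * C)⁻¹ := by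
      field_simp
    rwa [h2] at h1
  have hbdd : BddAbove (Set.range fun j : ℕ => qc a⁻¹ j / p j) := by
    refine ⟨(D * C)⁻¹, ?_⟩
    rintro y ⟨j, rfl⟩
    exact hB j
  set M := ⨆ j : ℕ, qc a⁻¹ j / p j with hMdef
  have hM0 : 0 < M :=
    lt_of_lt_of_le (div_pos (qc_pos hb0 hb1 0) (hppos 0)) (le_ciSup hbdd 0)
  have hqM : ∀ j, qc a⁻¹ j ≤ M * p j := by
    intro j
    have h1 : qc a⁻¹ j / p j ≤ M := le_ciSup hbdd j
    rw [div_le_iff₀ (hppos j)] at h1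
    linarith [h1]
  have hMiSup : M = ⨆ j : ℕ, qc a⁻¹ j / p j := hMdef
  clear_value M
  set h : ℕ → ℝ := fun j => (-1:ℝ) ^ j * (qc a⁻¹ j / p j) / M with hhdef
  have habs : ∀ j, |h j| = M⁻¹ * (qc a⁻¹ j / p j) := by
    intro j
    rw [hhdef]
    simp only
    rw [abs_div, abs_mul, abs_pow, abs_neg, abs_one, one_pow, one_mul, abs_of_pos hM0,
      abs_of_nonneg (div_nonneg (qc_pos hb0 hb1 j).le (hppos j).le)]
    rw [div_eq_inv_mul]
  have hfun : ∀ k : ℕ, (fun j : ℕ => a ^ (k * j) * p j * h j) =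
      fun j : ℕ => M⁻¹ * (qc a⁻¹ j * (-(a ^ k)) ^ j) := by
    intro k
    funext j
    rw [hhdef]
    simp only
    have hp := (hppos j).ne'
    have hM := hM0.ne'
    rw [neg_pow, pow_mul]
    field_simp
    ring
  refine ⟨⟨h, ?_, ?_, ?_⟩, ?_⟩
  · -- h ≠ 0
    intro heq
    have h1 : 0 < h 0 := by
      rw [hhdef]
      simp only [pow_zero, one_mul]
      exact div_pos (div_pos (qc_pos hb0 hb1 0) (hppos 0)) hM0
    rw [heq] at h1
    simp at h1
  · -- sup = 1
    calc (⨆ j : ℕ, |h j|) = ⨆ j : ℕ, M⁻¹ * (qc a⁻¹ j / p j) := iSup_congr habs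
      _ = M⁻¹ * ⨆ j : ℕ, qc a⁻¹ j / p j := (Real.mul_iSup_of_nonneg (inv_nonneg.2 hM0.le) _).symm
      _ = M⁻¹ * M := by rw [← hMiSup]
      _ = 1 := inv_mul_cancel₀ hM0.ne'
  · -- moments zero
    intro k
    have hs : Summable (fun j : ℕ => M⁻¹ * (qc a⁻¹ j * (-(a ^ k)) ^ j)) :=
      (qc_summable hb0 hb1 _).mul_left _
    constructor
    · exact hs.abs.congr fun j => (congrArg abs (congrFun (hfun k) j)).symm
    · rw [hfun k, tsum_mul_left, qc_moment_zero ha1 k, mul_zero]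
  · -- Part 3
    set p' : ℕ → ℝ := fun j => p j + (-1:ℝ) ^ j * qc a⁻¹ j / (2 * M) with hp'def
    have hqc_pos := fun j => qc_pos hb0 hb1 j
    have hhalf : ∀ j, qc a⁻¹ j / (2 * M) ≤ p j / 2 := by
      intro j
      rw [div_le_div_iff₀ (by linarith : (0:ℝ) < 2 * M) (by norm_num : (0:ℝ) < 2)]
      nlinarith [hqM j]
    have hp'nonneg : ∀ j, 0 ≤ p' j := by
      intro j
      rw [hp'def]
      simp only
      rcases Nat.even_or_odd j with he | ho
      · rw [he.neg_one_pow, one_mul]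
        have h9 : 0 < qc a⁻¹ j / (2 * M) :=
          div_pos (hqc_pos j) (by linarith : (0:ℝ) < 2 * M)
        linarith [hppos j]
      · rw [ho.neg_one_pow]
        have h9 : -1 * qc a⁻¹ j / (2 * M) = -(qc a⁻¹ j / (2 * M)) := by ring
        rw [h9]
        linarith [hhalf j, hppos j]
    have hsummp : ∀ k : ℕ, Summable (fun j : ℕ => a ^ (k * j) * p j) := by
      intro k
      have heq : (fun j : ℕ => a ^ (k * j) * p j) =
          fun j : ℕ => Z⁻¹ * (qc q j * (a ^ k * t) ^ j) := by
        funext j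
        rw [hpdef j, pow_mul, mul_pow]
        unfold qc
        have hP := (hqprod j).ne'
        field_simp
      rw [heq]
      exact (qc_summable hq0 hq1 _).mul_left _
    have hsummc : ∀ k : ℕ, Summable (fun j : ℕ => (2 * M)⁻¹ * (qc a⁻¹ j * (-(a ^ k)) ^ j)) :=
      fun k => (qc_summable hb0 hb1 _).mul_left _
    have hsplit : ∀ k : ℕ, ∀ j : ℕ, a ^ (k * j) * p' j =
        a ^ (k * j) * p j + (2 * M)⁻¹ * (qc a⁻¹ j * (-(a ^ k)) ^ j) := by
      intro k j
      rw [hp'def]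
      simp only
      rw [neg_pow, pow_mul]
      have hM := hM0.ne'
      field_simp
      ring
    have hmom : ∀ k : ℕ, (∑' j : ℕ, a ^ (k * j) * p' j) = ∑' j : ℕ, a ^ (k * j) * p j := by
      intro k
      calc (∑' j : ℕ, a ^ (k * j) * p' j)
          = ∑' j : ℕ, (a ^ (k * j) * p j + (2 * M)⁻¹ * (qc a⁻¹ j * (-(a ^ k)) ^ j)) :=
            tsum_congr (hsplit k)
        _ = (∑' j : ℕ, a ^ (k * j) * p j) +
              ∑' j : ℕ, (2 * M)⁻¹ * (qc a⁻¹ j * (-(a ^ k)) ^ j) :=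
            Summable.tsum_add (hsummp k) (hsummc k)
        _ = ∑' j : ℕ, a ^ (k * j) * p j := by
            rw [tsum_mul_left, qc_moment_zero ha1 k, mul_zero, add_zero]
    have hsum0 : (∑' j : ℕ, p' j) = ∑' j : ℕ, p j := by
      have h0 := hmom 0
      have e1 : (fun j : ℕ => a ^ (0 * j) * p' j) = fun j : ℕ => p' j := by
        funext j; simp
      have e2 : (fun j : ℕ => a ^ (0 * j) * p j) = fun j : ℕ => p j := by
        funext j; simp
      rw [e1, e2] at h0
      exact h0
    refine ⟨p', hp'nonneg, hsum0, ?_, hmom⟩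
    intro heq
    have h1 := congrFun heq 0
    rw [hp'def] at h1
    simp only [pow_zero, one_mul] at h1
    have h2 : 0 < qc a⁻¹ 0 / (2 * M) :=
      div_pos (qc_pos hb0 hb1 0) (by linarith : (0:ℝ) < 2 * M)
    have h3 : qc a⁻¹ 0 / (2 * M) = 0 := by linarith [h1]
    linarith
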